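/- Let α, g, h, K be positive real constants, and let x_g denote the unique solution in (0,∞) of (g·h/α)·(1 − e^{−αx}) = g·h·x − K·α. For θ ∈ [0,∞) and w ∈ ℝ define G_w(θ) := K·e^{−αθ} + g·h·(1/α² − e^{−αθ}/α² − (θ/α)·e^{−αθ}) + e^{−αθ}·w, and G_w(∞) := g·h/α². Then there is exactly one w ∈ [0,∞) satisfying the fixed-point equation w = inf_{θ∈[0,∞]} G_w(θ), namely w* := g·h·x_g/α − K, and moreover w* = K·(1 − e^{−α x_g})/(α·x_g − 1 + e^{−α x_g}) and w* > 0. -/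

import Mathlib

open Filter
open scoped NNReal ENNReal Topology

/-- The function `G_w` on `[0,∞)`:
`G_w(θ) = K e^{-αθ} + g h (1/α² - e^{-αθ}/α² - (θ/α) e^{-αθ}) + e^{-αθ} w`. -/
noncomputable def Gfin (α g h K w θ : ℝ) : ℝ :=
  K * Real.exp (-α * θ) +
    g * h * (1 / α ^ 2 - Real.exp (-α * θ) / α ^ 2 - (θ / α) * Real.exp (-α * θ)) +
    Real.exp (-α * θ) * w

/-- The extension of `G_w` to `[0,∞]` (realized as `ℝ≥0∞`), with
`G_w(∞) := g·h/α²`. -/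
noncomputable def Gext (α g h K w : ℝ) (θ : ℝ≥0∞) : ℝ :=
  if θ = ∞ then g * h / α ^ 2 else Gfin α g h K w θ.toReal

/-- Value of `Gfin` at the critical point `θ_w = α(K+w)/(gh)`. -/
lemma Gfin_at (α g h K w : ℝ) (hα : α ≠ 0) (hgh : g * h ≠ 0) :
    Gfin α g h K w (α * (K + w) / (g * h))
      = g * h / α ^ 2 * (1 - Real.exp (-α * (α * (K + w) / (g * h)))) := by
  unfold Gfin
  have hg0 : g ≠ 0 := left_ne_zero_of_mul hgh
  have hh0 : h ≠ 0 := right_ne_zero_of_mul hgh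
  field_simp
  ring

/-- `Gfin` is bounded below by its value at the critical point. -/
lemma Gfin_lower (α g h K w t : ℝ) (hα : 0 < α) (hgh : 0 < g * h) :
    g * h / α ^ 2 * (1 - Real.exp (-α * (α * (K + w) / (g * h)))) ≤ Gfin α g h K w t := by
  set θw := α * (K + w) / (g * h) with hθw
  have key : 0 ≤ Real.exp (-(α * t)) * (α * θw - α * t - 1) + Real.exp (-(α * θw)) := by
    have h1 := Real.add_one_le_exp (α * t - α * θw)
    have h2 : Real.exp (-(α * t)) * Real.exp (α * t - α * θw) = Real.exp (-(α * θw)) := by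
      rw [← Real.exp_add]; ring_nf
    nlinarith [Real.exp_pos (-(α * t)), Real.exp_pos (α * t - α * θw)]
  have h2 : 0 ≤ g * h / α ^ 2 *
      (Real.exp (-(α * t)) * (α * θw - α * t - 1) + Real.exp (-(α * θw))) :=
    mul_nonneg (by positivity) key
  have h3 : Gfin α g h K w t - g * h / α ^ 2 * (1 - Real.exp (-α * θw))
      = g * h / α ^ 2 *
        (Real.exp (-(α * t)) * (α * θw - α * t - 1) + Real.exp (-(α * θw))) := by
    unfold Gfin
    rw [hθw]
    have hα' : α ≠ 0 := ne_of_gt hα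
    have hgh' : g * h ≠ 0 := ne_of_gt hgh
    simp only [neg_mul]
    have hg0 : g ≠ 0 := left_ne_zero_of_mul hgh'
    have hh0 : h ≠ 0 := right_ne_zero_of_mul hgh'
    field_simp
    ring
  linarith

/-- For `K + w ≥ 0`, the infimum of `Gext` over `[0,∞]` is
`(gh/α²)(1 - e^{-αθ_w})`, attained at the critical point `θ_w`. -/
lemma glb_at (α g h K w : ℝ) (hα : 0 < α) (hgh : 0 < g * h) (hKw : 0 ≤ K + w) :
    IsGLB (Set.range (Gext α g h K w))
      (g * h / α ^ 2 * (1 - Real.exp (-α * (α * (K + w) / (g * h))))) := by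
  constructor
  · rintro x ⟨θ, rfl⟩
    unfold Gext
    split_ifs with hθ
    · have he : 0 < Real.exp (-α * (α * (K + w) / (g * h))) := Real.exp_pos _
      have hq : 0 < g * h / α ^ 2 := by positivity
      nlinarith
    · exact Gfin_lower α g h K w θ.toReal hα hgh
  · intro b hb
    have hmem : Gext α g h K w (ENNReal.ofReal (α * (K + w) / (g * h)))
        = g * h / α ^ 2 * (1 - Real.exp (-α * (α * (K + w) / (g * h)))) := by
      unfold Gext
      rw [if_neg ENNReal.ofReal_ne_top, ENNReal.toReal_ofReal (by positivity)]
      exact Gfin_at α g h K w (ne_of_gt hα) (ne_of_gt hgh)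
    have := hb (Set.mem_range_self (ENNReal.ofReal (α * (K + w) / (g * h))))
    rwa [hmem] at this

lemma exp_diff_lt (a b : ℝ) (ha : 0 < a) (hab : a < b) :
    Real.exp (-a) - Real.exp (-b) < b - a := by
  have h1 := Real.add_one_le_exp (a - b)
  have h2 : Real.exp (-b) = Real.exp (-a) * Real.exp (a - b) := by
    rw [← Real.exp_add]; ring_nf
  have h3 : Real.exp (a - b) < 1 := by
    apply Real.exp_lt_one_iff.mpr; linarith
  have h4 : Real.exp (-a) < 1 := by
    apply Real.exp_lt_one_iff.mpr; linarith
  nlinarith [Real.exp_pos (-a), Real.exp_pos (a - b)]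

/-- Two distinct nonnegative fixed points of the map
`w ↦ (gh/α²)(1 - e^{-α²(K+w)/(gh)})` cannot exist. -/
lemma fixed_lt (α g h K w1 w2 : ℝ) (hα : 0 < α) (hgh : 0 < g * h) (hK : 0 < K)
    (h1 : 0 ≤ w1) (hlt : w1 < w2)
    (e1 : w1 = g * h / α ^ 2 * (1 - Real.exp (-(α * (α * (K + w1) / (g * h))))))
    (e2 : w2 = g * h / α ^ 2 * (1 - Real.exp (-(α * (α * (K + w2) / (g * h)))))) :
    False := by
  set a := α * (α * (K + w1) / (g * h)) with ha_def
  set b := α * (α * (K + w2) / (g * h)) with hb_def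
  have ha : 0 < a := by
    have : 0 < K + w1 := by linarith
    positivity
  have hab : a < b := by
    rw [ha_def, hb_def]
    gcongr
  have key := exp_diff_lt a b ha hab
  have hba : g * h / α ^ 2 * (b - a) = w2 - w1 := by
    have hg0 : g ≠ 0 := left_ne_zero_of_mul hgh.ne'
    have hh0 : h ≠ 0 := right_ne_zero_of_mul hgh.ne'
    rw [ha_def, hb_def]; field_simp; ring
  have hq : 0 < g * h / α ^ 2 := by positivity
  nlinarith [mul_lt_mul_of_pos_left key hq]

/-- Let `α, g, h, K > 0` and let `x_g` be the unique solution in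
`(0,∞)` of `(gh/α)(1 - e^{-αx}) = ghx - Kα`.  Then there is exactly one `w ∈ [0,∞)`
satisfying the fixed-point equation `w = inf_{θ ∈ [0,∞]} G_w(θ)`, namely
`w* = g·h·x_g/α - K`; moreover `w* = K(1 - e^{-αx_g})/(αx_g - 1 + e^{-αx_g})` and
`w* > 0`. -/
theorem stmt12 (α g h K xg : ℝ) (hα : 0 < α) (hg : 0 < g) (hh : 0 < h) (hK : 0 < K)
    (hxg : 0 < xg)
    (hxgeq : g * h / α * (1 - Real.exp (-α * xg)) = g * h * xg - K * α) :
    (∀ w : ℝ, (0 ≤ w ∧ IsGLB (Set.range (Gext α g h K w)) w) ↔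
      w = g * h * xg / α - K) ∧
    g * h * xg / α - K
      = K * (1 - Real.exp (-α * xg)) / (α * xg - 1 + Real.exp (-α * xg)) ∧
    0 < g * h * xg / α - K := by
  have hα' : α ≠ 0 := ne_of_gt hα
  have hgh : 0 < g * h := mul_pos hg hh
  have hgh' : g * h ≠ 0 := ne_of_gt hgh
  have hE : Real.exp (-α * xg) < 1 := by
    apply Real.exp_lt_one_iff.mpr; nlinarith
  -- w* expressed via the fixed-point value
  have hw' : g * h * xg / α - K = g * h / α ^ 2 * (1 - Real.exp (-α * xg)) := by
    have hxgeq' := hxgeq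
    field_simp at hxgeq' ⊢
    nlinarith [hxgeq']
  have hwpos : 0 < g * h * xg / α - K := by
    rw [hw']
    apply mul_pos (by positivity)
    linarith
  -- the critical point of G_{w*} is x_g
  have hθ : α * (K + (g * h * xg / α - K)) / (g * h) = xg := by
    field_simp
    ring
  -- w* is a fixed point (in the normalized form used by `fixed_lt`)
  have hfix : g * h * xg / α - K
      = g * h / α ^ 2 *
        (1 - Real.exp (-(α * (α * (K + (g * h * xg / α - K)) / (g * h))))) := by
    rw [hθ, ← neg_mul]
    exact hw'
  -- the denominator identity
  have hKeq : K * α ^ 2 = g * h * (α * xg - 1 + Real.exp (-α * xg)) := by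
    have hxgeq' := hxgeq
    simp only [neg_mul] at hxgeq' ⊢
    field_simp at hxgeq'
    linarith [hxgeq']
  have hDpos : 0 < α * xg - 1 + Real.exp (-α * xg) := by
    nlinarith [mul_pos hK (mul_pos hα hα)]
  refine ⟨fun w => ⟨?_, ?_⟩, ?_, hwpos⟩
  · rintro ⟨hw0, hglb⟩
    have hglb2 := glb_at α g h K w hα hgh (by linarith)
    have hww := hglb.unique hglb2
    simp only [neg_mul] at hww
    rcases lt_trichotomy w (g * h * xg / α - K) with hlt | heq | hgt
    · exact (fixed_lt α g h K w (g * h * xg / α - K) hα hgh hK hw0 hlt hww hfix).elim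
    · exact heq
    · exact (fixed_lt α g h K (g * h * xg / α - K) w hα hgh hK
        (le_of_lt hwpos) hgt hfix hww).elim
  · rintro rfl
    refine ⟨le_of_lt hwpos, ?_⟩
    have hglb := glb_at α g h K (g * h * xg / α - K) hα hgh (by linarith)
    rw [hθ, ← hw'] at hglb
    exact hglb
  · -- the alternative expression for w*
    rw [hw', eq_div_iff (ne_of_gt hDpos)]
    calc g * h / α ^ 2 * (1 - Real.exp (-α * xg)) * (α * xg - 1 + Real.exp (-α * xg))
        = g * h * (α * xg - 1 + Real.exp (-α * xg)) * (1 - Real.exp (-α * xg)) / α ^ 2 := by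
          ring
      _ = K * α ^ 2 * (1 - Real.exp (-α * xg)) / α ^ 2 := by rw [← hKeq]
      _ = K * (1 - Real.exp (-α * xg)) := by
          field_simp
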